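/- Let V₁, V₂ be matrices whose Hermitian parts are negative semidefinite (V_i* + V_i ≤ 0). Then for all Δt ≥ 0, the symmetric product L^s = exp(Δt V₁/2) exp(Δt V₂) exp(Δt V₁/2) satisfies ‖L^s‖ ≤ 1, and ‖exp(Δt(V₁+V₂)) − L^s‖ = O(Δt³) as Δt → 0. -/

import Mathlib

set_option synthInstance.maxHeartbeats 1000000
set_option maxHeartbeats 1000000
open Matrix Asymptotics NormedSpace
open scoped ComplexOrder InnerProductSpace

variable {n : ℕ}

local notation "T" => Matrix.toEuclideanCLM (𝕜 := ℂ) (n := Fin n)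

lemma T_cont : Continuous (fun A : Matrix (Fin n) (Fin n) ℂ => T A) := by
  let L : Matrix (Fin n) (Fin n) ℂ →ₗ[ℂ] (EuclideanSpace ℂ (Fin n) →L[ℂ] EuclideanSpace ℂ (Fin n)) :=
    { toFun := fun A => T A
      map_add' := fun a b => map_add _ a b
      map_smul' := fun c a => map_smul _ c a }
  exact L.continuous_of_finiteDimensional

lemma T_exp (A : Matrix (Fin n) (Fin n) ℂ) : T (exp A) = exp (T A) := by
  letI : SeminormedRing (Matrix (Fin n) (Fin n) ℂ) := Matrix.linftyOpSemiNormedRing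
  letI : NormedRing (Matrix (Fin n) (Fin n) ℂ) := Matrix.linftyOpNormedRing
  letI : NormedAlgebra ℂ (Matrix (Fin n) (Fin n) ℂ) := Matrix.linftyOpNormedAlgebra
  exact map_exp_of_mem_ball (𝕂 := ℂ) (𝔸 := Matrix (Fin n) (Fin n) ℂ) T T_cont A ((expSeries_radius_eq_top ℂ (Matrix (Fin n) (Fin n) ℂ)).symm ▸ edist_lt_top _ _)

lemma T_smul (t : ℝ) (A : Matrix (Fin n) (Fin n) ℂ) : T (t • A) = t • T A := by
  rw [← smul_one_smul ℂ t A, _root_.map_smul, smul_one_smul]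

lemma re_mulVec_nonpos (V : Matrix (Fin n) (Fin n) ℂ) (h : (-(Vᴴ + V)).PosSemidef)
    (v : Fin n → ℂ) : (star v ⬝ᵥ (V *ᵥ v)).re + (star (V *ᵥ v) ⬝ᵥ v).re ≤ 0 := by
  have h2 := h.dotProduct_mulVec_nonneg v
  have key : star (V *ᵥ v) ⬝ᵥ v = star v ⬝ᵥ (Vᴴ *ᵥ v) := by
    rw [Matrix.dotProduct_mulVec, Matrix.star_mulVec]
  have hsum : star v ⬝ᵥ (V *ᵥ v) + star (V *ᵥ v) ⬝ᵥ v = -(star v ⬝ᵥ ((-(Vᴴ + V)) *ᵥ v)) := by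
    rw [key, Matrix.neg_mulVec, dotProduct_neg, neg_neg, Matrix.add_mulVec,
      dotProduct_add]
    ring
  have := (Complex.le_def.mp h2).1
  have hre : (star v ⬝ᵥ (V *ᵥ v)).re + (star (V *ᵥ v) ⬝ᵥ v).re
      = -((star v ⬝ᵥ ((-(Vᴴ + V)) *ᵥ v)).re) := by
    rw [← Complex.add_re, hsum, Complex.neg_re]
  rw [hre]
  simpa using this

lemma contraction (V : Matrix (Fin n) (Fin n) ℂ) (h : (-(Vᴴ + V)).PosSemidef)
    {t : ℝ} (ht : 0 ≤ t) : ‖T (exp (t • V))‖ ≤ 1 := by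
  set M := T V with hM
  have hTexp : T (exp (t • V)) = exp (t • M) := by
    rw [T_exp, T_smul]
  rw [hTexp]
  refine ContinuousLinearMap.opNorm_le_bound _ zero_le_one fun x => ?_
  rw [one_mul]
  set u : ℝ → EuclideanSpace ℂ (Fin n) := fun s => exp (s • M) x with hu_def
  have hu : ∀ s : ℝ, HasDerivAt u (M (u s)) s := by
    intro s
    have h1 : HasDerivAt (fun s : ℝ => exp (s • M)) (M * exp (s • M)) s :=
      hasDerivAt_exp_smul_const' M s
    have h2 := ((ContinuousLinearMap.apply ℂ (EuclideanSpace ℂ (Fin n)) x).restrictScalars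
      ℝ).hasFDerivAt.comp_hasDerivAt s h1
    simp only [ContinuousLinearMap.mul_apply] at h2
    exact h2
  set φ : ℝ → ℝ := fun s => RCLike.re (⟪u s, u s⟫_ℂ) with hφ_def
  have hφ : ∀ s : ℝ, HasDerivAt φ
      (RCLike.re ((⟪u s, M (u s)⟫_ℂ) + (⟪M (u s), u s⟫_ℂ))) s := by
    intro s
    have h1 := (hu s).inner ℂ (hu s)
    exact (RCLike.reCLM.hasFDerivAt.comp_hasDerivAt s h1)
  have hnonpos : ∀ s : ℝ, RCLike.re ((⟪u s, M (u s)⟫_ℂ) + (⟪M (u s), u s⟫_ℂ)) ≤ 0 := by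
    intro s
    set v : Fin n → ℂ := WithLp.equiv 2 _ (u s) with hv
    have hMu : WithLp.equiv 2 _ (M (u s)) = V *ᵥ v := by
      exact Matrix.ofLp_toEuclideanCLM V (u s)
    have e1 : ⟪u s, M (u s)⟫_ℂ = star v ⬝ᵥ (V *ᵥ v) := by
      rw [EuclideanSpace.inner_eq_star_dotProduct, dotProduct_comm]
      exact congrArg (fun w => star v ⬝ᵥ w) hMu
    have e2 : ⟪M (u s), u s⟫_ℂ = star (V *ᵥ v) ⬝ᵥ v := by
      rw [EuclideanSpace.inner_eq_star_dotProduct, dotProduct_comm]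
      exact congrArg (fun w => star w ⬝ᵥ v) hMu
    rw [e1, e2]
    simpa [Complex.add_re] using re_mulVec_nonpos V h v
  have hanti : Antitone φ :=
    antitone_of_deriv_nonpos (fun s => (hφ s).differentiableAt)
      (fun s => by rw [(hφ s).deriv]; exact hnonpos s)
  have h0 : φ t ≤ φ 0 := hanti ht
  have hu0 : u 0 = x := by have hz : (0:ℝ) • M = 0 := zero_smul ℝ M; show (exp ((0:ℝ) • M)) x = x; rw [hz, NormedSpace.exp_zero]; exact ContinuousLinearMap.one_apply x
  have hφt : φ t = ‖u t‖ ^ 2 := inner_self_eq_norm_sq (𝕜 := ℂ) (u t)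
  have hφ0 : φ 0 = ‖x‖ ^ 2 := by rw [hφ_def]; simp only [hu0]; exact inner_self_eq_norm_sq (𝕜 := ℂ) x
  have : ‖u t‖ ^ 2 ≤ ‖x‖ ^ 2 := by rw [← hφt, ← hφ0]; exact h0
  nlinarith [norm_nonneg (u t), norm_nonneg x]

section Generic
variable {𝔸 : Type*} [NormedRing 𝔸] [NormedAlgebra ℝ 𝔸] [CompleteSpace 𝔸]

lemma expz (M : 𝔸) : exp ((0:ℝ) • M) = 1 := by
  rw [zero_smul, NormedSpace.exp_zero]

lemma exp_analyticAt (M : 𝔸) (t : ℝ) : AnalyticAt ℝ (fun s : ℝ => exp (s • M)) t := by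
  have hlin : AnalyticAt ℝ (fun s : ℝ => s • M) t :=
    analyticAt_id.smul analyticAt_const
  have hexp : AnalyticAt ℝ exp (t • M) :=
    analyticAt_exp_of_mem_ball (𝕂 := ℝ) (t • M)
      (by rw [expSeries_radius_eq_top ℝ]; exact edist_lt_top _ _)
  simpa [Function.comp_def] using AnalyticAt.comp (g := exp) (f := fun s : ℝ => s • M) (x := t) hexp hlin

lemma strang_bigO (B C : 𝔸) :
    (fun t : ℝ => exp (t • (B + C)) -
        exp (t • ((2⁻¹:ℝ) • B)) * exp (t • C) * exp (t • ((2⁻¹:ℝ) • B)))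
      =O[nhds 0] fun t : ℝ => t ^ 3 := by
  set B2 : 𝔸 := (2⁻¹:ℝ) • B with hB2
  set A : 𝔸 := B + C with hA
  set ea : ℝ → 𝔸 := fun t => exp (t • A) with hea_def
  set eb : ℝ → 𝔸 := fun t => exp (t • B2) with heb_def
  set ec : ℝ → 𝔸 := fun t => exp (t • C) with hec_def
  set f : ℝ → 𝔸 := fun t => ea t - eb t * ec t * eb t with hf_def
  have hea : ∀ t : ℝ, HasDerivAt ea (ea t * A) t := fun t => hasDerivAt_exp_smul_const A t
  have heb : ∀ t : ℝ, HasDerivAt eb (eb t * B2) t := fun t => hasDerivAt_exp_smul_const B2 t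
  have hec : ∀ t : ℝ, HasDerivAt ec (ec t * C) t := fun t => hasDerivAt_exp_smul_const C t
  set D : ℝ → 𝔸 := fun t => ea t * A -
      (((eb t * B2) * ec t + eb t * (ec t * C)) * eb t + eb t * ec t * (eb t * B2)) with hD_def
  have hf : ∀ t : ℝ, HasDerivAt f (D t) t := fun t =>
    (hea t).sub (((heb t).mul (hec t)).mul (heb t))
  have hderiv : deriv f = D := funext fun t => (hf t).deriv
  -- values at 0
  have hea0 : ea 0 = 1 := expz A
  have heb0 : eb 0 = 1 := expz B2
  have hec0 : ec 0 = 1 := expz C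
  -- second derivative at 0
  have hD0 : HasDerivAt D
      (ea 0 * A * A -
        (((((eb 0 * B2) * B2) * ec 0 + (eb 0 * B2) * (ec 0 * C)) +
            ((eb 0 * B2) * (ec 0 * C) + eb 0 * ((ec 0 * C) * C))) * eb 0 +
          ((eb 0 * B2) * ec 0 + eb 0 * (ec 0 * C)) * (eb 0 * B2) +
          (((eb 0 * B2) * ec 0 + eb 0 * (ec 0 * C)) * (eb 0 * B2) +
            eb 0 * ec 0 * ((eb 0 * B2) * B2)))) 0 := by
    have h1 := (((heb 0).mul_const B2).mul (hec 0)).add ((heb 0).mul ((hec 0).mul_const C))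
    have h2 := (h1.mul (heb 0)).add (((heb 0).mul (hec 0)).mul ((heb 0).mul_const B2))
    have h3 := ((hea 0).mul_const A).sub h2
    convert h3 using 1 <;> rfl
  -- the three iterated derivatives vanish
  have hit0 : f 0 = 0 := by
    rw [hf_def]; simp only [hea0, heb0, hec0, one_mul, sub_self]
  have hit1 : deriv f 0 = 0 := by
    rw [hderiv, hD_def]
    simp only [hea0, heb0, hec0, one_mul, mul_one, hA, hB2]
    module
  have hit2 : deriv (deriv f) 0 = 0 := by
    rw [hderiv, hD0.deriv]
    simp only [hea0, heb0, hec0, one_mul, mul_one, hA, hB2]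
    simp only [smul_mul_assoc, mul_smul_comm, smul_smul, mul_add, add_mul]
    module
  -- analyticity
  have hfa : AnalyticAt ℝ f 0 :=
    ((exp_analyticAt A 0).sub (((exp_analyticAt B2 0).mul (exp_analyticAt C 0)).mul
      (exp_analyticAt B2 0)))
  obtain ⟨p, hp⟩ := hfa
  obtain ⟨r, hpb⟩ := id hp
  have hterm : ∀ y : ℝ, ∀ k, k < 3 → (p k fun _ => y) = 0 := by
    intro y k hk
    have h1 : (Nat.factorial k) • (p k fun _ => y) = iteratedFDeriv ℝ k f 0 fun _ => y :=
      hpb.factorial_smul y k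
    have h2 : iteratedDeriv k f 0 = 0 := by
      interval_cases k
      · rwa [iteratedDeriv_zero]
      · rwa [iteratedDeriv_one]
      · rw [show (2:ℕ) = 1 + 1 from rfl, iteratedDeriv_succ, iteratedDeriv_one]
        exact hit2
    have h3 : iteratedFDeriv ℝ k f 0 (fun _ => y) = 0 := by
      rw [iteratedFDeriv_apply_eq_iteratedDeriv_mul_prod, h2, smul_zero]
    rw [h3] at h1
    have h4 : ((Nat.factorial k : ℝ)) • (p k fun _ => y) = 0 := by
      rw [Nat.cast_smul_eq_nsmul]; exact h1
    rcases smul_eq_zero.mp h4 with h | h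
    · exact absurd h (by exact_mod_cast Nat.factorial_ne_zero k)
    · exact h
  have hps : ∀ y : ℝ, p.partialSum 3 y = 0 := by
    intro y
    exact Finset.sum_eq_zero fun k hk => hterm y k (Finset.mem_range.mp hk)
  have key := hp.isBigO_sub_partialSum_pow 3
  have hkey : (fun y : ℝ => f (0 + y) - p.partialSum 3 y) = f := by
    funext y; rw [hps, sub_zero, zero_add]
  rw [hkey] at key
  have : (fun y : ℝ => ‖y‖ ^ 3) =O[nhds 0] fun y : ℝ => y ^ 3 :=
    isBigO_of_le _ fun y => by
      simp [abs_pow, abs_norm]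
  exact key.trans this
end Generic

/-- the Strang-split product L^s = exp(ΔtV₁/2)exp(ΔtV₂)exp(ΔtV₁/2) of two
matrices with negative semidefinite Hermitian parts has Euclidean operator norm ≤ 1 for
Δt ≥ 0, and differs from exp(Δt(V₁+V₂)) by O(Δt³) as Δt → 0. -/
theorem stmt16 {n : ℕ} (V1 V2 : Matrix (Fin n) (Fin n) ℂ)
    (h1 : (-(V1ᴴ + V1)).PosSemidef) (h2 : (-(V2ᴴ + V2)).PosSemidef) :
    (∀ Δt : ℝ, 0 ≤ Δt →
      ‖Matrix.toEuclideanCLM (𝕜 := ℂ)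
        (NormedSpace.exp ((Δt / 2) • V1) * NormedSpace.exp (Δt • V2) *
          NormedSpace.exp ((Δt / 2) • V1))‖ ≤ 1) ∧
    (fun Δt : ℝ =>
        Matrix.toEuclideanCLM (𝕜 := ℂ)
          (NormedSpace.exp (Δt • (V1 + V2)) -
            NormedSpace.exp ((Δt / 2) • V1) * NormedSpace.exp (Δt • V2) *
              NormedSpace.exp ((Δt / 2) • V1)))
      =O[nhds 0] (fun Δt : ℝ => Δt ^ 3) := by
  set B := Matrix.toEuclideanCLM (𝕜 := ℂ) V1 with hB
  set C := Matrix.toEuclideanCLM (𝕜 := ℂ) V2 with hC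
  constructor
  · intro t ht
    have hb : ‖Matrix.toEuclideanCLM (𝕜 := ℂ) (exp ((t / 2) • V1))‖ ≤ 1 :=
      contraction V1 h1 (by linarith)
    have hc : ‖Matrix.toEuclideanCLM (𝕜 := ℂ) (exp (t • V2))‖ ≤ 1 := contraction V2 h2 ht
    rw [_root_.map_mul, _root_.map_mul]
    calc ‖Matrix.toEuclideanCLM (𝕜 := ℂ) (exp ((t / 2) • V1)) * Matrix.toEuclideanCLM (𝕜 := ℂ) (exp (t • V2)) * Matrix.toEuclideanCLM (𝕜 := ℂ) (exp ((t / 2) • V1))‖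
        ≤ ‖Matrix.toEuclideanCLM (𝕜 := ℂ) (exp ((t / 2) • V1)) * Matrix.toEuclideanCLM (𝕜 := ℂ) (exp (t • V2))‖ * ‖Matrix.toEuclideanCLM (𝕜 := ℂ) (exp ((t / 2) • V1))‖ :=
          norm_mul_le _ _
      _ ≤ 1 := by
          have h4 := norm_mul_le (Matrix.toEuclideanCLM (𝕜 := ℂ) (exp ((t / 2) • V1))) (Matrix.toEuclideanCLM (𝕜 := ℂ) (exp (t • V2)))
          have n1 := norm_nonneg (Matrix.toEuclideanCLM (𝕜 := ℂ) (exp ((t / 2) • V1)))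
          have n2 := norm_nonneg (Matrix.toEuclideanCLM (𝕜 := ℂ) (exp (t • V2)))
          have n3 := norm_nonneg (Matrix.toEuclideanCLM (𝕜 := ℂ) (exp ((t / 2) • V1)) * Matrix.toEuclideanCLM (𝕜 := ℂ) (exp (t • V2)))
          nlinarith
  · have hEq : (fun t : ℝ =>
        Matrix.toEuclideanCLM (𝕜 := ℂ) (exp (t • (V1 + V2)) -
          exp ((t / 2) • V1) * exp (t • V2) * exp ((t / 2) • V1)))
        = (fun t : ℝ => exp (t • (B + C)) -
            exp (t • ((2⁻¹:ℝ) • B)) * exp (t • C) * exp (t • ((2⁻¹:ℝ) • B))) := by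
      funext t
      have hhalf : ∀ t : ℝ, (t • ((2⁻¹:ℝ) • B)) = (t / 2) • B := by
        intro t; rw [smul_smul, div_eq_mul_inv]
      rw [map_sub, _root_.map_mul, _root_.map_mul, T_exp, T_exp, T_exp, T_smul, T_smul, T_smul, map_add,
        ← hB, ← hC, hhalf]
    rw [hEq]
    exact strang_bigO B C
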